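/- Let (a_t)_{t≥0} be a nonnegative real sequence satisfying a_{t+1} ≤ (1 − λ/(t+1)) a_t + β/(t+1)² for all t ≥ 0, where λ > 1 and β > 0. Then a_t ≤ Q/(t+1) for all t ≥ 0, where Q = max{a_0, 2a_1, …, (⌊λ⌋+1)a_{⌊λ⌋}, (⌊λ⌋+2)a_{⌊λ⌋+1}, β/(λ−1)}. -/

import Mathlib

theorem stmt_8 (a : ℕ → ℝ) (ha : ∀ t, 0 ≤ a t) (lam β : ℝ) (hlam : 1 < lam) (hβ : 0 < β)
    (hrec : ∀ t : ℕ, a (t + 1) ≤ (1 - lam / ((t : ℝ) + 1)) * a t + β / ((t : ℝ) + 1) ^ 2)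
    (Q : ℝ)
    (hQ : Q = max (β / (lam - 1))
        ((Finset.range (Nat.floor lam + 2)).sup'
          (Finset.nonempty_range_iff.mpr (by omega)) (fun i => ((i : ℝ) + 1) * a i))) :
    ∀ t : ℕ, a t ≤ Q / ((t : ℝ) + 1) := by
  have hQβ : β / (lam - 1) ≤ Q := hQ ▸ le_max_left _ _
  have hβQ : β ≤ Q * (lam - 1) := by
    rw [div_le_iff₀ (by linarith)] at hQβ; linarith
  have hQ0 : 0 ≤ Q := le_trans (le_of_lt (div_pos hβ (by linarith))) hQβ
  have hbase : ∀ t : ℕ, t < Nat.floor lam + 2 → a t ≤ Q / ((t : ℝ) + 1) := by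
    intro t ht
    have h1 : ((t : ℝ) + 1) * a t ≤ Q := by
      rw [hQ]
      exact le_trans (Finset.le_sup' (f := fun i : ℕ => ((i : ℝ) + 1) * a i)
        (Finset.mem_range.mpr ht)) (le_max_right _ _)
    rw [le_div_iff₀ (by positivity)]
    linarith [mul_comm ((t : ℝ) + 1) (a t)]
  intro t
  induction t with
  | zero => exact hbase 0 (by omega)
  | succ s ih =>
    by_cases h : s + 1 < Nat.floor lam + 2
    · exact hbase (s + 1) h
    · have hs : Nat.floor lam + 1 ≤ s := by omega
      have hsl : lam ≤ (s : ℝ) := by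
        have := Nat.lt_floor_add_one lam
        have : lam < (Nat.floor lam : ℝ) + 1 := this
        have hc : ((Nat.floor lam : ℕ) : ℝ) + 1 ≤ (s : ℝ) := by
          exact_mod_cast hs
        linarith
      have hn : (0 : ℝ) < (s : ℝ) + 1 := by positivity
      set n : ℝ := (s : ℝ) + 1 with hnd
      have key : (1 - lam / n) * (Q / n) + β / n ^ 2 ≤ Q / (n + 1) := by
        have hln : lam ≤ n := by linarith
        have hn' : n ≠ 0 := hn.ne'
        rw [le_div_iff₀ (by positivity : (0:ℝ) < n + 1)]
        field_simp
        have hk := mul_nonneg (sub_nonneg.mpr hβQ) (by positivity : (0:ℝ) ≤ n + 1)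
        nlinarith [mul_nonneg (mul_nonneg (sub_nonneg.mpr hβQ)
            (by positivity : (0:ℝ) ≤ n + 1)) (sq_nonneg n),
          mul_nonneg hQ0 (sq_nonneg n), hn]
      have hstep : a (s + 1) ≤ (1 - lam / n) * (Q / n) + β / n ^ 2 := by
        have h1 : (0 : ℝ) ≤ 1 - lam / n := by
          rw [sub_nonneg, div_le_one hn]; linarith
        have := hrec s
        have h2 : (1 - lam / n) * a s ≤ (1 - lam / n) * (Q / n) :=
          mul_le_mul_of_nonneg_left ih h1
        calc a (s + 1) ≤ (1 - lam / n) * a s + β / n ^ 2 := hrec s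
          _ ≤ _ := by linarith
      have : ((s + 1 : ℕ) : ℝ) + 1 = n + 1 := by push_cast [hnd]; ring
      rw [this]
      linarith
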